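/- arXiv:1304.0350 — 3 statements merged into one kernel-verified Lean document; each statement's English description precedes it below -/
import Mathlib

section
/- Let a ≥ 1 be an integer and let G be the subgroup of permutations of (ℤ/aℤ)² generated by the two maps (x, y) ↦ (x + y, y) and (x, y) ↦ (x, x + y). Then two elements (x, y) and (x', y') of (ℤ/aℤ)² lie in the same G-orbit if and only if gcd(x, y, a) = gcd(x', y', a). -/
/-- The shear (x, y) ↦ (x + y, y) as a permutation of (ℤ/aℤ)². -/
def shear1 (a : ℕ) : Equiv.Perm (ZMod a × ZMod a) where
  toFun p := (p.1 + p.2, p.2)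
  invFun p := (p.1 - p.2, p.2)
  left_inv p := by simp
  right_inv p := by simp

/-- The shear (x, y) ↦ (x, x + y) as a permutation of (ℤ/aℤ)². -/
def shear2 (a : ℕ) : Equiv.Perm (ZMod a × ZMod a) where
  toFun p := (p.1, p.1 + p.2)
  invFun p := (p.1, p.2 - p.1)
  left_inv p := by simp
  right_inv p := by simp

section aux
variable (a : ℕ)

/-- the orbit relation -/
def SameOrb (v w : ZMod a × ZMod a) : Prop :=
  ∃ g ∈ Subgroup.closure {shear1 a, shear2 a}, g v = w

lemma SameOrb.refl (v) : SameOrb a v v := ⟨1, one_mem _, rfl⟩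

lemma SameOrb.symm {v w} (h : SameOrb a v w) : SameOrb a w v := by
  obtain ⟨g, hg, hgv⟩ := h
  exact ⟨g⁻¹, inv_mem hg, by simp [← hgv]⟩

lemma SameOrb.trans {u v w} (h1 : SameOrb a u v) (h2 : SameOrb a v w) : SameOrb a u w := by
  obtain ⟨g, hg, hgv⟩ := h1
  obtain ⟨g', hg', hgv'⟩ := h2
  exact ⟨g' * g, mul_mem hg' hg, by simp [Equiv.Perm.mul_apply, hgv, hgv']⟩

lemma sameOrb_shear1 (v) : SameOrb a v (v.1 + v.2, v.2) :=
  ⟨shear1 a, Subgroup.subset_closure (by simp), rfl⟩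

lemma sameOrb_shear2 (v) : SameOrb a v (v.1, v.1 + v.2) :=
  ⟨shear2 a, Subgroup.subset_closure (by simp), rfl⟩

lemma sameOrb_addMul1 (k : ℕ) (u v : ZMod a) : SameOrb a (u, v) (u + k * v, v) := by
  induction k with
  | zero => simpa using SameOrb.refl a (u, v)
  | succ n ih =>
      refine ih.trans a ?_
      have := sameOrb_shear1 a (u + n * v, v)
      simpa [add_mul, add_assoc, add_comm, add_left_comm] using this

lemma sameOrb_addMul2 (k : ℕ) (u v : ZMod a) : SameOrb a (u, v) (u, v + k * u) := by
  induction k with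
  | zero => simpa using SameOrb.refl a (u, v)
  | succ n ih =>
      refine ih.trans a ?_
      have := sameOrb_shear2 a (u, v + n * u)
      simpa [add_mul, add_assoc, add_comm, add_left_comm] using this

lemma sameOrb_euclid : ∀ y x : ℕ, SameOrb a ((x : ZMod a), (y : ZMod a))
    (((Nat.gcd x y : ℕ) : ZMod a), 0) := by
  intro y
  induction y using Nat.strong_induction_on with
  | _ y ih =>
    intro x
    rcases Nat.eq_zero_or_pos y with hy | hy
    · subst hy; simpa using SameOrb.refl a _
    · -- reduce x mod y
      have h1 : SameOrb a ((x % y : ℕ), (y : ZMod a)) ((x : ZMod a), (y : ZMod a)) := by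
        have := sameOrb_addMul1 a (x / y) ((x % y : ℕ) : ZMod a) (y : ZMod a)
        have hx : ((x % y : ℕ) : ZMod a) + (x / y : ℕ) * (y : ZMod a) = (x : ZMod a) := by
          rw [← Nat.cast_mul, ← Nat.cast_add, Nat.mod_add_div']
        rwa [hx] at this
      refine (h1.symm a).trans a ?_
      rcases Nat.eq_zero_or_pos (x % y) with hxy | hxy
      · -- (0, y) → (y, y) → (y, 0), gcd x y = gcd y (x % y) = y
        rw [hxy]
        have hg : Nat.gcd x y = y := by
          rw [Nat.gcd_comm, Nat.gcd_rec, hxy, Nat.gcd_zero_left]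
        rw [hg]
        have s1 := sameOrb_shear1 a (((0:ℕ) : ZMod a), (y : ZMod a))
        have s2 : SameOrb a ((y : ZMod a), (y : ZMod a)) ((y : ZMod a), 0) := by
          refine SameOrb.symm a ?_
          have := sameOrb_shear2 a ((y : ZMod a), 0)
          simpa using this
        refine SameOrb.trans a ?_ s2
        simpa using s1
      · -- reduce y mod (x % y) via shear2 inverse, then IH
        have h2 : SameOrb a (((x % y : ℕ) : ZMod a), ((y % (x % y) : ℕ) : ZMod a))
            (((x % y : ℕ) : ZMod a), (y : ZMod a)) := by
          have := sameOrb_addMul2 a (y / (x % y)) (((x % y : ℕ)) : ZMod a)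
            ((y % (x % y) : ℕ) : ZMod a)
          have hy2 : ((y % (x % y) : ℕ) : ZMod a) +
              (y / (x % y) : ℕ) * ((x % y : ℕ) : ZMod a) = (y : ZMod a) := by
            rw [← Nat.cast_mul, ← Nat.cast_add, Nat.mod_add_div']
          rwa [hy2] at this
        refine (h2.symm a).trans a ?_
        have hlt : y % (x % y) < y := lt_of_lt_of_le (Nat.mod_lt _ hxy)
          (le_of_lt (Nat.mod_lt _ hy))
        have := ih _ hlt (x % y)
        have hg : Nat.gcd (x % y) (y % (x % y)) = Nat.gcd x y := by
          rw [Nat.gcd_comm (x % y), ← Nat.gcd_rec, ← Nat.gcd_rec, Nat.gcd_comm]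
        rwa [hg] at this

end aux

section aux2
variable (a : ℕ)

def Dg (v : ZMod a × ZMod a) : ℕ := Nat.gcd (Nat.gcd v.1.val v.2.val) a

lemma gcd_mod_aux (s m : ℕ) (hma : m ∣ a) : Nat.gcd (s % a) m = Nat.gcd s m := by
  have h : (s % a) % m = s % m := Nat.mod_mod_of_dvd s hma
  rw [Nat.gcd_comm, Nat.gcd_comm s, Nat.gcd_rec m (s % a), Nat.gcd_rec m s, h]

lemma key_gcd [NeZero a] (u v : ZMod a) :
    Nat.gcd (Nat.gcd (u + v).val v.val) a = Nat.gcd (Nat.gcd u.val v.val) a := by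
  rw [Nat.gcd_assoc, Nat.gcd_assoc]
  set m := Nat.gcd v.val a with hm
  have hma : m ∣ a := Nat.gcd_dvd_right _ _
  obtain ⟨c, hc⟩ : m ∣ v.val := Nat.gcd_dvd_left _ _
  rw [ZMod.val_add, gcd_mod_aux a _ m hma, hc, Nat.gcd_add_mul_left_left]

lemma Dg_shear1 [NeZero a] (v) : Dg a (shear1 a v) = Dg a v := by
  show Nat.gcd (Nat.gcd (v.1 + v.2).val v.2.val) a = Nat.gcd (Nat.gcd v.1.val v.2.val) a
  exact key_gcd a v.1 v.2

lemma Dg_shear2 [NeZero a] (v) : Dg a (shear2 a v) = Dg a v := by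
  show Nat.gcd (Nat.gcd v.1.val (v.1 + v.2).val) a = Nat.gcd (Nat.gcd v.1.val v.2.val) a
  rw [Nat.gcd_comm v.1.val, add_comm, key_gcd a v.2 v.1, Nat.gcd_comm v.2.val]

lemma Dg_closure [NeZero a] (g : Equiv.Perm (ZMod a × ZMod a))
    (hg : g ∈ Subgroup.closure {shear1 a, shear2 a}) (v) : Dg a (g v) = Dg a v := by
  induction hg using Subgroup.closure_induction generalizing v with
  | mem g hgmem =>
      rcases hgmem with h | h
      · subst h; exact Dg_shear1 a v
      · subst h; exact Dg_shear2 a v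
  | one => rfl
  | mul g h _ _ ihg ihh => rw [Equiv.Perm.mul_apply, ihg, ihh]
  | inv g _ ihg => rw [← ihg (g⁻¹ v)]; simp

lemma sameOrb_canonical [NeZero a] (v) : SameOrb a v (((Dg a v : ℕ) : ZMod a), 0) := by
  have hv : v = ((v.1.val : ZMod a), (v.2.val : ZMod a)) := by
    simp [ZMod.natCast_val, ZMod.cast_id]
  set g := Nat.gcd v.1.val v.2.val with hgdef
  set d := Nat.gcd g a with hddef
  have step1 : SameOrb a v ((g : ZMod a), 0) := by
    rw [hv]; exact sameOrb_euclid a v.2.val v.1.val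
  -- Bezout: (d : ZMod a) = z * g for z the cast of gcdA
  set z : ZMod a := ((Nat.gcdA g a : ℤ) : ZMod a) with hz
  have hbez : (d : ZMod a) = z * (g : ZMod a) := by
    have := Nat.gcd_eq_gcd_ab g a
    have : ((d : ℤ) : ZMod a) = (((g : ℤ) * Nat.gcdA g a + (a : ℤ) * Nat.gcdB g a : ℤ) : ZMod a) := by
      rw [← this]
    push_cast at this
    rw [ZMod.natCast_self] at this
    rw [this]; ring
  have step2 : SameOrb a ((g : ZMod a), 0) ((g : ZMod a), (d : ZMod a)) := by
    have := sameOrb_addMul2 a z.val (g : ZMod a) 0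
    have hzv : ((z.val : ℕ) : ZMod a) = z := by simp [ZMod.natCast_val, ZMod.cast_id]
    rw [hzv, zero_add, ← hbez] at this
    exact this
  obtain ⟨c, hc⟩ : d ∣ g := Nat.gcd_dvd_left _ _
  have step3 : SameOrb a ((g : ZMod a), (d : ZMod a)) (0, (d : ZMod a)) := by
    refine SameOrb.symm a ?_
    have := sameOrb_addMul1 a c 0 (d : ZMod a)
    rw [zero_add] at this
    have hgc : (c : ZMod a) * (d : ZMod a) = (g : ZMod a) := by
      rw [← Nat.cast_mul, hc, mul_comm]
    rwa [hgc] at this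
  have step4 : SameOrb a (0, (d : ZMod a)) ((d : ZMod a), (d : ZMod a)) := by
    have := sameOrb_shear1 a (0, (d : ZMod a))
    simpa using this
  have step5 : SameOrb a ((d : ZMod a), (d : ZMod a)) ((d : ZMod a), 0) := by
    refine SameOrb.symm a ?_
    have := sameOrb_shear2 a ((d : ZMod a), 0)
    simpa using this
  exact ((((step1.trans a step2).trans a step3).trans a step4).trans a step5)

end aux2


/-- Two elements of (ℤ/aℤ)² lie in the same orbit of the group generated by the
two shears iff gcd(x, y, a) = gcd(x', y', a). -/
theorem orbit_iff_gcd_eq (a : ℕ) (ha : 1 ≤ a) (v w : ZMod a × ZMod a) :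
    (∃ g ∈ Subgroup.closure {shear1 a, shear2 a}, g v = w) ↔
      Nat.gcd (Nat.gcd v.1.val v.2.val) a = Nat.gcd (Nat.gcd w.1.val w.2.val) a := by
  haveI : NeZero a := ⟨by omega⟩
  constructor
  · rintro ⟨g, hg, rfl⟩
    exact (Dg_closure a g hg v).symm
  · intro h
    have h1 := sameOrb_canonical a v
    have h2 := sameOrb_canonical a w
    have h' : Dg a v = Dg a w := h
    rw [h'] at h1
    exact h1.trans a (h2.symm a)
end

section
/- Let a ≥ 1 be an integer and G the subgroup of permutations of (ℤ/aℤ)² generated by (x, y) ↦ (x + y, y) and (x, y) ↦ (x, x + y). Then the number of G-orbits on (ℤ/aℤ)² equals the number of positive divisors of a. -/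
namespace ShearAux

abbrev Gp (a : ℕ) : Subgroup (Equiv.Perm (ZMod a × ZMod a)) :=
  Subgroup.closure {shear1 a, shear2 a}

abbrev Q (a : ℕ) := MulAction.orbitRel.Quotient (Gp a) (ZMod a × ZMod a)

/-- the invariant: gcd of first coord, second coord and a. -/
def fInv {a : ℕ} (p : ZMod a × ZMod a) : ℕ := Nat.gcd (Nat.gcd p.1.val p.2.val) a

lemma hs1 {a : ℕ} : shear1 a ∈ Gp a :=
  Subgroup.subset_closure (Set.mem_insert _ _)

lemma hs2 {a : ℕ} : shear2 a ∈ Gp a :=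
  Subgroup.subset_closure (Set.mem_insert_of_mem _ rfl)

lemma gcd_mod (n A B : ℕ) (h : A % n = B % n) : Nat.gcd A n = Nat.gcd B n := by
  rw [Nat.gcd_comm A n, Nat.gcd_comm B n, Nat.gcd_rec n A, Nat.gcd_rec n B, h]

lemma core {a : ℕ} [NeZero a] (x y : ZMod a) :
    Nat.gcd (Nat.gcd ((x + y).val) y.val) a = Nat.gcd (Nat.gcd x.val y.val) a := by
  rw [Nat.gcd_assoc, Nat.gcd_assoc]
  set m := Nat.gcd y.val a with hm
  have hma : m ∣ a := Nat.gcd_dvd_right _ _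
  have hmy : m ∣ y.val := Nat.gcd_dvd_left _ _
  apply gcd_mod
  rw [ZMod.val_add]
  obtain ⟨k, hk⟩ := hmy
  calc (x.val + y.val) % a % m = (x.val + y.val) % m := Nat.mod_mod_of_dvd _ hma
    _ = (x.val + m * k) % m := by rw [hk]
    _ = x.val % m := by rw [Nat.add_mul_mod_self_left]

lemma fInv_shear1 {a : ℕ} [NeZero a] (p : ZMod a × ZMod a) :
    fInv (shear1 a p) = fInv p := core p.1 p.2

lemma fInv_shear2 {a : ℕ} [NeZero a] (p : ZMod a × ZMod a) :
    fInv (shear2 a p) = fInv p := by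
  show Nat.gcd (Nat.gcd p.1.val ((p.1 + p.2).val)) a = _
  rw [Nat.gcd_comm p.1.val, add_comm p.1 p.2, core p.2 p.1, Nat.gcd_comm p.2.val]
  rfl

lemma fInv_invariant {a : ℕ} [NeZero a] {g : Equiv.Perm (ZMod a × ZMod a)}
    (hg : g ∈ Gp a) (p : ZMod a × ZMod a) : fInv (g p) = fInv p := by
  induction hg using Subgroup.closure_induction generalizing p with
  | mem x hx =>
    rcases hx with h | h
    · rw [h]; exact fInv_shear1 p
    · rw [h]; exact fInv_shear2 p
  | one => rfl
  | mul x y hx hy ihx ihy => rw [Equiv.Perm.mul_apply, ihx, ihy]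
  | inv x hx ihx =>
    have := ihx (p := x⁻¹ p)
    rw [← Equiv.Perm.mul_apply, mul_inv_cancel, Equiv.Perm.one_apply] at this
    exact this.symm

lemma mk_eq {a : ℕ} {g : Equiv.Perm (ZMod a × ZMod a)} (hg : g ∈ Gp a)
    (p : ZMod a × ZMod a) :
    (Quotient.mk'' (g p) : Q a) = Quotient.mk'' p :=
  Quotient.sound' (MulAction.orbitRel_apply.mpr ⟨⟨g, hg⟩, rfl⟩)

lemma shear1_pow {a : ℕ} (k : ℕ) (p : ZMod a × ZMod a) :
    ((shear1 a) ^ k) p = (p.1 + (k : ZMod a) * p.2, p.2) := by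
  induction k generalizing p with
  | zero => simp
  | succ n ih =>
    rw [pow_succ, Equiv.Perm.mul_apply, ih]
    show ((p.1 + p.2) + (n : ZMod a) * p.2, p.2) = _
    rw [Prod.mk.injEq]
    refine ⟨?_, rfl⟩
    push_cast
    ring

lemma shear1_inv_pow {a : ℕ} (k : ℕ) (p : ZMod a × ZMod a) :
    (((shear1 a)⁻¹) ^ k) p = (p.1 - (k : ZMod a) * p.2, p.2) := by
  induction k generalizing p with
  | zero => simp
  | succ n ih =>
    rw [pow_succ, Equiv.Perm.mul_apply, ih]
    show ((p.1 - p.2) - (n : ZMod a) * p.2, p.2) = _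
    rw [Prod.mk.injEq]
    refine ⟨?_, rfl⟩
    push_cast
    ring

lemma shear2_inv_pow {a : ℕ} (k : ℕ) (p : ZMod a × ZMod a) :
    (((shear2 a)⁻¹) ^ k) p = (p.1, p.2 - (k : ZMod a) * p.1) := by
  induction k generalizing p with
  | zero => simp
  | succ n ih =>
    rw [pow_succ, Equiv.Perm.mul_apply, ih]
    show (p.1, (p.2 - p.1) - (n : ZMod a) * p.1) = _
    rw [Prod.mk.injEq]
    refine ⟨rfl, ?_⟩
    push_cast
    ring

lemma base {a : ℕ} [NeZero a] (x : ZMod a) :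
    (Quotient.mk'' ((Nat.gcd x.val a : ZMod a), 0) : Q a) = Quotient.mk'' (x, 0) := by
  have ha : 0 < a := Nat.pos_of_ne_zero (NeZero.ne a)
  set u := x.val with hu
  set d := Nat.gcd u a with hd
  -- find m : ℕ with 1 ≤ m and (m : ZMod a) * x = d
  obtain ⟨m, hm1, hm2⟩ : ∃ m : ℕ, 1 ≤ m ∧ (m : ZMod a) * x = (d : ZMod a) := by
    set s : ℤ := Nat.gcdA u a with hs
    have key : ((s : ZMod a)) * x = (d : ZMod a) := by
      have hb : (d : ℤ) = u * s + a * Nat.gcdB u a := Nat.gcd_eq_gcd_ab u a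
      have := congrArg (fun z : ℤ => (z : ZMod a)) hb
      simp only [Int.cast_add, Int.cast_mul, Int.cast_natCast, ZMod.natCast_self,
        zero_mul, add_zero] at this
      rw [mul_comm]
      calc x * (s : ZMod a) = ((u : ℕ) : ZMod a) * (s : ZMod a) := by
            rw [ZMod.natCast_rightInverse x]
        _ = (d : ZMod a) := by rw [← this]
    refine ⟨(s % (a : ℤ) + a).toNat, ?_, ?_⟩
    · have h1 : 0 ≤ s % (a : ℤ) := Int.emod_nonneg s (by exact_mod_cast ha.ne')
      omega
    · have h1 : 0 ≤ s % (a : ℤ) := Int.emod_nonneg s (by exact_mod_cast ha.ne')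
      have h2 : (((s % (a : ℤ) + a).toNat : ℤ) : ZMod a) = ((s % (a : ℤ) + a : ℤ) : ZMod a) := by
        rw [Int.toNat_of_nonneg (by omega)]
      rw [← key]
      congr 1
      have h3 : ((s % (a : ℤ) + a : ℤ) : ZMod a) = ((s : ℤ) : ZMod a) := by
        rw [ZMod.intCast_eq_intCast_iff]
        show (s % (a : ℤ) + a) % a = s % a
        simp [Int.add_mul_emod_self_left, Int.emod_emod_of_dvd]
      rw [show (((s % (a : ℤ) + a).toNat : ℕ) : ZMod a) = (((s % (a : ℤ) + a).toNat : ℤ) : ZMod a) by push_cast; ring, h2, h3]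
  -- step A : (x,0) ~ (x,x)
  have hA : (Quotient.mk'' (x, x) : Q a) = Quotient.mk'' (x, 0) := by
    have h := mk_eq hs2 (x, (0 : ZMod a))
    have h2 : (shear2 a) (x, (0 : ZMod a)) = (x, x) := by
      show (x, x + 0) = (x, x)
      rw [add_zero]
    rwa [h2] at h
  -- step B : (x,x) ~ (d, x)
  have hB : (Quotient.mk'' ((d : ZMod a), x) : Q a) = Quotient.mk'' (x, x) := by
    have := mk_eq (Subgroup.pow_mem _ hs1 (m - 1)) (x, x)
    rw [shear1_pow] at this
    have hxx : x + ((m - 1 : ℕ) : ZMod a) * x = (d : ZMod a) := by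
      rw [← hm2]
      have : ((m : ℕ) : ZMod a) = ((m - 1 : ℕ) : ZMod a) + 1 := by
        rw [show m = (m - 1) + 1 by omega]; push_cast; ring
      rw [this]; ring
    rwa [hxx] at this
  -- step C : (d, x) ~ (d, 0)
  have hC : (Quotient.mk'' ((d : ZMod a), 0) : Q a) = Quotient.mk'' ((d : ZMod a), x) := by
    have := mk_eq (Subgroup.pow_mem _ (Subgroup.inv_mem _ hs2) (u / d)) ((d : ZMod a), x)
    rw [shear2_inv_pow] at this
    have hx0 : x - ((u / d : ℕ) : ZMod a) * (d : ZMod a) = 0 := by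
      rw [show ((u / d : ℕ) : ZMod a) * (d : ZMod a) = ((u / d * d : ℕ) : ZMod a) by push_cast; ring,
        Nat.div_mul_cancel (Nat.gcd_dvd_left u a), hu, ZMod.natCast_rightInverse x, sub_self]
    rwa [hx0] at this
  rw [hC, hB, hA]

lemma main {a : ℕ} [NeZero a] : ∀ n : ℕ, ∀ p : ZMod a × ZMod a, p.2.val = n →
    (Quotient.mk'' ((fInv p : ZMod a), 0) : Q a) = Quotient.mk'' p := by
  intro n
  induction n using Nat.strong_induction_on with
  | _ n ih =>
    intro p hp
    rcases Nat.eq_zero_or_pos n with h0 | hpos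
    · have h2 : p.2 = 0 := by rw [← ZMod.val_eq_zero, hp, h0]
      have hpp : p = (p.1, 0) := by rw [← h2]
      rw [hpp]
      have : fInv (p.1, (0 : ZMod a)) = Nat.gcd p.1.val a := by
        simp [fInv, ZMod.val_zero]
      rw [this]
      exact base p.1
    · -- second coordinate nonzero
      set A := p.1.val with hA
      set B := p.2.val with hB
      have hBn : B = n := hp
      have hBa : B < a := ZMod.val_lt p.2
      set x' : ZMod a := p.1 - ((A / B : ℕ) : ZMod a) * p.2 with hx'def
      have hx'cast : x' = ((A % B : ℕ) : ZMod a) := by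
        have h1 : p.1 = (A : ZMod a) := (ZMod.natCast_rightInverse p.1).symm
        have h2 : p.2 = (B : ZMod a) := (ZMod.natCast_rightInverse p.2).symm
        have hle : A / B * B ≤ A := Nat.div_mul_le_self A B
        have hmod : A % B = A - A / B * B := by
          have := Nat.mod_add_div' A B
          omega
        rw [hx'def, hmod]
        rw [h1, h2]
        rw [Nat.cast_sub hle]
        push_cast
        ring
      have hx'val : x'.val = A % B := by
        rw [hx'cast, ZMod.val_cast_of_lt]
        calc A % B < B := Nat.mod_lt _ (hBn ▸ hpos)
          _ < a := hBa
      have hR1 : (Quotient.mk'' (x', p.2) : Q a) = Quotient.mk'' p := by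
        have := mk_eq (Subgroup.pow_mem _ (Subgroup.inv_mem _ hs1) (A / B)) p
        rwa [shear1_inv_pow] at this
      rcases Nat.eq_zero_or_pos (A % B) with hm0 | hmpos
      · -- x' = 0 ; move to (p.2, 0) and recurse
        have hx'0 : x' = 0 := by rw [← ZMod.val_eq_zero, hx'val, hm0]
        rw [hx'0] at hR1
        have hR2 : (Quotient.mk'' (p.2, p.2) : Q a) = Quotient.mk'' (0, p.2) := by
          have := mk_eq hs1 ((0 : ZMod a), p.2)
          rw [show (shear1 a) ((0 : ZMod a), p.2) = ((0 : ZMod a) + p.2, p.2) from rfl,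
            zero_add] at this
          exact this
        have hR3 : (Quotient.mk'' (p.2, 0) : Q a) = Quotient.mk'' (p.2, p.2) := by
          have := mk_eq (Subgroup.inv_mem _ hs2) (p.2, p.2)
          rw [show ((shear2 a)⁻¹) (p.2, p.2) = (p.2, p.2 - p.2) from rfl, sub_self] at this
          exact this
        have hrec := ih 0 (hBn ▸ hpos) (p.2, (0 : ZMod a)) (ZMod.val_zero)
        have hfeq : fInv (p.2, (0 : ZMod a)) = fInv p := by
          have hdvd : B ∣ A := Nat.dvd_of_mod_eq_zero hm0
          simp only [fInv, ZMod.val_zero, Nat.gcd_zero_right]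
          rw [← hA, ← hB, Nat.gcd_eq_right hdvd]
        rw [hfeq] at hrec
        rw [hrec, hR3, hR2, hR1]
      · -- reduce second coordinate mod m = A % B
        set m := A % B with hmdef
        set y' : ZMod a := p.2 - ((B / m : ℕ) : ZMod a) * x' with hy'def
        have hmB : m < B := Nat.mod_lt _ (hBn ▸ hpos)
        have hy'cast : y' = ((B % m : ℕ) : ZMod a) := by
          have h2 : p.2 = (B : ZMod a) := (ZMod.natCast_rightInverse p.2).symm
          have hle : B / m * m ≤ B := Nat.div_mul_le_self B m
          have hmod : B % m = B - B / m * m := by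
            have := Nat.mod_add_div' B m
            omega
          rw [hy'def, hmod, h2, hx'cast, Nat.cast_sub hle]
          push_cast
          ring
        have hy'val : y'.val = B % m := by
          rw [hy'cast, ZMod.val_cast_of_lt]
          calc B % m < m := Nat.mod_lt _ hmpos
            _ < a := lt_trans hmB hBa
        have hR2 : (Quotient.mk'' (x', y') : Q a) = Quotient.mk'' (x', p.2) := by
          have := mk_eq (Subgroup.pow_mem _ (Subgroup.inv_mem _ hs2) (B / m)) (x', p.2)
          rwa [shear2_inv_pow] at this
        have hlt : B % m < n := by
          calc B % m < m := Nat.mod_lt _ hmpos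
            _ < B := hmB
            _ = n := hBn
        have hrec := ih (B % m) hlt (x', y') hy'val
        have hfeq : fInv (x', y') = fInv p := by
          simp only [fInv]
          rw [hx'val, hy'val, ← hA, ← hB]
          congr 1
          have e1 : Nat.gcd m (B % m) = Nat.gcd A B := by
            rw [Nat.gcd_comm m (B % m), ← Nat.gcd_rec m B]
            have e2 : Nat.gcd m B = Nat.gcd (A % B) B := by rw [hmdef]
            rw [e2, ← Nat.gcd_rec B A, Nat.gcd_comm B A]
          rw [e1]
        rw [hfeq] at hrec
        rw [hrec, hR2, hR1]

end ShearAux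

open ShearAux

/-- The number of orbits of the group generated by the two shears on (ℤ/aℤ)²
equals the number of positive divisors of a. -/
theorem card_orbits_eq_card_divisors (a : ℕ) (ha : 1 ≤ a) :
    Nat.card (MulAction.orbitRel.Quotient
        (Subgroup.closure {shear1 a, shear2 a}) (ZMod a × ZMod a)) =
      a.divisors.card := by
  haveI : NeZero a := ⟨by omega⟩
  have e : Q a ≃ {d // d ∈ a.divisors} := by
    refine
      { toFun := Quotient.lift
          (fun p => (⟨fInv p, Nat.mem_divisors.mpr ⟨Nat.gcd_dvd_right _ _, by omega⟩⟩ :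
            {d // d ∈ a.divisors}))
          ?_
        invFun := fun d => Quotient.mk'' ((d.1 : ZMod a), 0)
        left_inv := ?_
        right_inv := ?_ }
    · intro p q hpq
      obtain ⟨g, hg⟩ := MulAction.orbitRel_apply.mp hpq
      have : (g : Equiv.Perm (ZMod a × ZMod a)) q = p := hg
      simp only [Subtype.mk.injEq]
      rw [← this]
      exact fInv_invariant g.2 q
    · intro q
      induction q using Quotient.inductionOn' with
      | h p => exact main p.2.val p rfl
    · rintro ⟨d, hd⟩
      obtain ⟨hdvd, _⟩ := Nat.mem_divisors.mp hd
      apply Subtype.ext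
      show fInv ((d : ZMod a), (0 : ZMod a)) = d
      simp only [fInv, ZMod.val_zero, Nat.gcd_zero_right, ZMod.val_natCast]
      rw [← Nat.gcd_rec a d, Nat.gcd_comm a d, Nat.gcd_eq_left hdvd]
  rw [Nat.card_congr e, Nat.card_eq_finsetCard]
end

section
/- Let a₁, a₂, a₃ be integers, not all zero, with a₁ + a₂ + a₃ = 0 and gcd(a₁, a₂, a₃) = 1. Then by repeatedly applying the moves (a₁, a₂, a₃) ↦ (a₁ − a₃, a₂ + a₃, a₃) and permutations of the three entries, one can transform (a₁, a₂, a₃) into (1, 1, −2). That is, (1,1,−2) lies in the orbit of (a₁,a₂,a₃) under the group generated by these operations on ℤ³. -/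
/-- One step of the reduction: either the shear move
(a₁,a₂,a₃) ↦ (a₁−a₃, a₂+a₃, a₃) or a transposition of entries (the two
transpositions below generate all permutations of the three entries). -/
inductive SigMove : ℤ × ℤ × ℤ → ℤ × ℤ × ℤ → Prop
  | shear (a₁ a₂ a₃ : ℤ) : SigMove (a₁, a₂, a₃) (a₁ - a₃, a₂ + a₃, a₃)
  | swap12 (a₁ a₂ a₃ : ℤ) : SigMove (a₁, a₂, a₃) (a₂, a₁, a₃)
  | swap23 (a₁ a₂ a₃ : ℤ) : SigMove (a₁, a₂, a₃) (a₁, a₃, a₂)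

open Relation

lemma reach_sub (a b c : ℤ) : ReflTransGen SigMove (a, b, c) (a - b, b, c + b) := by
  have h1 : SigMove (a, b, c) (a, c, b) := SigMove.swap23 a b c
  have h2 : SigMove (a, c, b) (a - b, c + b, b) := SigMove.shear a c b
  have h3 : SigMove (a - b, c + b, b) (a - b, b, c + b) := SigMove.swap23 _ _ _
  exact ReflTransGen.head h1 (ReflTransGen.head h2 (ReflTransGen.single h3))

lemma reach_add (a b c : ℤ) : ReflTransGen SigMove (a, b, c) (a + b, b, c - b) := by
  have h1 : SigMove (a, b, c) (a, c, b) := SigMove.swap23 a b c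
  have h2 : SigMove (a, c, b) (c, a, b) := SigMove.swap12 a c b
  have h3 : SigMove (c, a, b) (c - b, a + b, b) := SigMove.shear c a b
  have h4 : SigMove (c - b, a + b, b) (a + b, c - b, b) := SigMove.swap12 _ _ _
  have h5 : SigMove (a + b, c - b, b) (a + b, b, c - b) := SigMove.swap23 _ _ _
  exact .head h1 (.head h2 (.head h3 (.head h4 (.single h5))))

lemma reach_mul (a b c k : ℤ) : ReflTransGen SigMove (a, b, c) (a - k * b, b, c + k * b) := by
  induction k using Int.induction_on with
  | zero => simpa using ReflTransGen.refl
  | succ n ih =>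
      have := ih.trans (reach_sub (a - n * b) b (c + n * b))
      convert this using 2 <;> ring
  | pred n ih =>
      have := ih.trans (reach_add (a - (-n) * b) b (c + (-n) * b))
      convert this using 2 <;> ring

lemma reach_base1 : ReflTransGen SigMove ((1 : ℤ), 0, -1) (1, 1, -2) := by
  have h1 : SigMove ((1:ℤ), 0, -1) (0, 1, -1) := SigMove.swap12 1 0 (-1)
  have h2 : SigMove ((0:ℤ), 1, -1) (0, -1, 1) := SigMove.swap23 0 1 (-1)
  have h3 : SigMove ((0:ℤ), -1, 1) (-1, 0, 1) := SigMove.shear 0 (-1) 1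
  have h4 : SigMove ((-1:ℤ), 0, 1) (-2, 1, 1) := SigMove.shear (-1) 0 1
  have h5 : SigMove ((-2:ℤ), 1, 1) (1, -2, 1) := SigMove.swap12 (-2) 1 1
  have h6 : SigMove ((1:ℤ), -2, 1) (1, 1, -2) := SigMove.swap23 1 (-2) 1
  exact .head h1 (.head h2 (.head h3 (.head h4 (.head h5 (.single h6)))))

lemma reach_base2 : ReflTransGen SigMove ((-1 : ℤ), 0, 1) (1, 1, -2) := by
  have h4 : SigMove ((-1:ℤ), 0, 1) (-2, 1, 1) := SigMove.shear (-1) 0 1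
  have h5 : SigMove ((-2:ℤ), 1, 1) (1, -2, 1) := SigMove.swap12 (-2) 1 1
  have h6 : SigMove ((1:ℤ), -2, 1) (1, 1, -2) := SigMove.swap23 1 (-2) 1
  exact .head h4 (.head h5 (.single h6))

lemma natAbs_emod_lt (a b : ℤ) (hb : b ≠ 0) : (a % b).natAbs < b.natAbs := by
  have h1 : 0 ≤ a % b := Int.emod_nonneg a hb
  rcases lt_trichotomy b 0 with h | h | h
  · have h2 : a % b < -b := by
      have := Int.emod_lt_of_pos a (show (0:ℤ) < -b by omega)
      rwa [Int.emod_neg] at this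
    omega
  · exact absurd h hb
  · have h2 := Int.emod_lt_of_pos a h
    omega

lemma gcd_step (a b : ℤ) : Int.gcd b (a % b) = Int.gcd a b := by
  have hd : a % b = a - b * (a / b) := Int.emod_def a b
  apply Nat.dvd_antisymm
  · rw [← Int.natCast_dvd_natCast]
    apply Int.dvd_coe_gcd
    · have h1 : (Int.gcd b (a % b) : ℤ) ∣ b := Int.gcd_dvd_left _ _
      have h2 : (Int.gcd b (a % b) : ℤ) ∣ a % b := Int.gcd_dvd_right _ _
      have : (Int.gcd b (a % b) : ℤ) ∣ a - b * (a / b) := by rwa [← hd]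
      have := dvd_add this (h1.mul_right (a / b))
      simpa using this
    · exact Int.gcd_dvd_left _ _
  · rw [← Int.natCast_dvd_natCast]
    apply Int.dvd_coe_gcd
    · exact Int.gcd_dvd_right _ _
    · rw [hd]; exact dvd_sub (Int.gcd_dvd_left _ _) ((Int.gcd_dvd_right _ _).mul_right _)

lemma aux : ∀ n : ℕ, ∀ a b c : ℤ, b.natAbs = n → a + b + c = 0 → Int.gcd a b = 1 →
    ReflTransGen SigMove (a, b, c) (1, 1, -2) := by
  intro n
  induction n using Nat.strong_induction_on with
  | _ n ih =>
    intro a b c hn hsum hg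
    by_cases hb : b = 0
    · subst hb
      have hg' : a.natAbs = 1 := by simpa [Int.gcd] using hg
      have ha : a = 1 ∨ a = -1 := by omega
      rcases ha with rfl | rfl
      · have : c = -1 := by linarith
        subst this; exact reach_base1
      · have : c = 1 := by linarith
        subst this; exact reach_base2
    · -- reduce a modulo b
      set q := a / b with hq
      have h1 : ReflTransGen SigMove (a, b, c) (a - q * b, b, c + q * b) := reach_mul a b c q
      have hr : a - q * b = a % b := by rw [Int.emod_def]; ring
      have h2 : SigMove (a - q * b, b, c + q * b) (b, a - q * b, c + q * b) :=
        SigMove.swap12 _ _ _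
      have hlt : (a % b).natAbs < n := hn ▸ natAbs_emod_lt a b hb
      have h3 : ReflTransGen SigMove (b, a - q * b, c + q * b) (1, 1, -2) := by
        rw [hr]
        apply ih _ hlt _ _ _ rfl
        · have : a - q*b + (c + q*b) = a + c := by ring
          rw [hr] at this; linarith [this]
        · rw [gcd_step a b]; exact hg
      exact (h1.trans (ReflTransGen.head h2 h3))

/-- Every primitive nonzero zero-sum triple can be transformed into (1,1,−2)
by the shear move and permutations of the entries. -/
theorem reduce_to_one_one_negtwo (a₁ a₂ a₃ : ℤ)
    (hne : ¬ (a₁ = 0 ∧ a₂ = 0 ∧ a₃ = 0))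
    (hsum : a₁ + a₂ + a₃ = 0)
    (hgcd : Int.gcd (Int.gcd a₁ a₂) a₃ = 1) :
    Relation.ReflTransGen SigMove (a₁, a₂, a₃) (1, 1, -2) := by
  have hd : ((Int.gcd a₁ a₂ : ℤ)) ∣ a₃ := by
    have h3 : a₃ = -(a₁ + a₂) := by linarith
    rw [h3]
    exact (dvd_add (Int.gcd_dvd_left _ _) (Int.gcd_dvd_right _ _)).neg_right
  have : Int.gcd ((Int.gcd a₁ a₂ : ℤ)) a₃ = Int.gcd a₁ a₂ := by
    exact_mod_cast Int.gcd_eq_left (Int.natCast_nonneg _) hd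
  rw [this] at hgcd
  exact aux _ a₁ a₂ a₃ rfl hsum hgcd
end
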